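/- arXiv:0808.4148 — 2 statements merged into one kernel-verified Lean document; each statement's English description precedes it below -/
import Mathlib

section
/- Let Ω ⊆ ℂ^n be open, let ρ : Ω → ℝ be of class C², and let ξ ∈ Ω be a point at which the Levi form of ρ is positive definite, i.e. L_ρ(ξ)(w) > 0 for every w ∈ ℂ^n with w ≠ 0. Let F be the Levi polynomial of ρ at ξ. Then there exists ε with 0 < ε < 1/2 such that the closed ball {z : |z−ξ| ≤ 2ε} is contained in Ω and Re F(z) ≥ ρ(ξ) − ρ(z) + 2ε·|z−ξ|² for all z with |z−ξ| ≤ 2ε. -/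
open Complex Metric

noncomputable section

/-- The Levi form of `ρ` at `ξ`, evaluated at `w`:
`L_ρ(ξ)(w) = (1/4)·(D²ρ(ξ)(w,w) + D²ρ(ξ)(iw,iw))`. -/
def leviForm {n : ℕ} (ρ : EuclideanSpace ℂ (Fin n) → ℝ)
    (ξ w : EuclideanSpace ℂ (Fin n)) : ℝ :=
  (1 / 4) * (fderiv ℝ (fderiv ℝ ρ) ξ w w
    + fderiv ℝ (fderiv ℝ ρ) ξ (Complex.I • w) (Complex.I • w))

/-- `j`-th standard basis vector of `ℂⁿ`. -/
def basisVec {n : ℕ} (j : Fin n) : EuclideanSpace ℂ (Fin n) :=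
  EuclideanSpace.single j 1

/-- Wirtinger derivative `∂ρ/∂z_j` at `ξ`: `(1/2)(∂ρ/∂x_j − i ∂ρ/∂y_j)`,
expressed through real directional derivatives in the directions `e_j` and `i·e_j`. -/
def wirt1 {n : ℕ} (ρ : EuclideanSpace ℂ (Fin n) → ℝ)
    (ξ : EuclideanSpace ℂ (Fin n)) (j : Fin n) : ℂ :=
  (1 / 2 : ℂ) * ((fderiv ℝ ρ ξ (basisVec j) : ℝ)
    - Complex.I * ((fderiv ℝ ρ ξ (Complex.I • basisVec j) : ℝ) : ℂ))

/-- Second Wirtinger derivative `∂²ρ/∂z_j∂z_k` at `ξ`: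
`(1/4)(∂²_{x_j x_k} − ∂²_{y_j y_k} − i(∂²_{y_j x_k} + ∂²_{x_j y_k}))ρ(ξ)`,
expressed through the second real Fréchet derivative. -/
def wirt2 {n : ℕ} (ρ : EuclideanSpace ℂ (Fin n) → ℝ)
    (ξ : EuclideanSpace ℂ (Fin n)) (j k : Fin n) : ℂ :=
  (1 / 4 : ℂ) * (((fderiv ℝ (fderiv ℝ ρ) ξ (basisVec j) (basisVec k) : ℝ) : ℂ)
    - ((fderiv ℝ (fderiv ℝ ρ) ξ (Complex.I • basisVec j) (Complex.I • basisVec k) : ℝ) : ℂ)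
    - Complex.I * (((fderiv ℝ (fderiv ℝ ρ) ξ (Complex.I • basisVec j) (basisVec k) : ℝ) : ℂ)
      + ((fderiv ℝ (fderiv ℝ ρ) ξ (basisVec j) (Complex.I • basisVec k) : ℝ) : ℂ)))

/-- The Levi polynomial of `ρ` at `ξ`:
`F(z) = −2·Σ_j (∂ρ/∂z_j)(ξ)(z_j−ξ_j) − Σ_{j,k} (∂²ρ/∂z_j∂z_k)(ξ)(z_j−ξ_j)(z_k−ξ_k)`. -/
def leviPoly {n : ℕ} (ρ : EuclideanSpace ℂ (Fin n) → ℝ)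
    (ξ z : EuclideanSpace ℂ (Fin n)) : ℂ :=
  (-2 : ℂ) * ∑ j, wirt1 ρ ξ j * (z j - ξ j)
    - ∑ j, ∑ k, wirt2 ρ ξ j k * (z j - ξ j) * (z k - ξ k)

/-! ### Auxiliary lemmas -/

lemma my_smul_decomp {n : ℕ} (c : ℂ) (v : EuclideanSpace ℂ (Fin n)) :
    c • v = c.re • v + c.im • (Complex.I • v) := by
  rw [← smul_assoc, ← Complex.coe_smul c.re v, ← add_smul]
  norm_num [Complex.re_add_im]

lemma my_clm_expand {n : ℕ} (T : EuclideanSpace ℂ (Fin n) →L[ℝ] ℝ)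
    (w : EuclideanSpace ℂ (Fin n)) :
    T w = ∑ j, ((w j).re * T (basisVec j) + (w j).im * T (Complex.I • basisVec j)) := by
  have hw : w = ∑ j, (w j) • basisVec j := by
    ext k
    rw [WithLp.ofLp_sum, Finset.sum_apply]
    simp [basisVec, EuclideanSpace.single_apply]
  conv_lhs => rw [hw]
  rw [map_sum]
  refine Finset.sum_congr rfl fun j _ => ?_
  rw [my_smul_decomp, map_add, map_smul, map_smul]
  simp [smul_eq_mul]

lemma my_clm2_expand {n : ℕ}
    (P : EuclideanSpace ℂ (Fin n) →L[ℝ] EuclideanSpace ℂ (Fin n) →L[ℝ] ℝ)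
    (u v : EuclideanSpace ℂ (Fin n)) :
    P u v = ∑ j, ∑ k,
      ((u j).re * (v k).re * P (basisVec j) (basisVec k)
      + (u j).re * (v k).im * P (basisVec j) (Complex.I • basisVec k)
      + (u j).im * (v k).re * P (Complex.I • basisVec j) (basisVec k)
      + (u j).im * (v k).im * P (Complex.I • basisVec j) (Complex.I • basisVec k)) := by
  have h1 : P u v = ∑ j, ((u j).re * P (basisVec j) v
      + (u j).im * P (Complex.I • basisVec j) v) := by
    have := my_clm_expand (P.flip v) u
    simpa using this
  rw [h1]
  refine Finset.sum_congr rfl fun j _ => ?_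
  rw [my_clm_expand (P (basisVec j)) v, my_clm_expand (P (Complex.I • basisVec j)) v,
    Finset.mul_sum, Finset.mul_sum, ← Finset.sum_add_distrib]
  refine Finset.sum_congr rfl fun k _ => ?_
  ring

/-- The key algebraic identity:
`Re F(z) = −Dρ(ξ)(h) − (1/2)·D²ρ(ξ)(h,h) + L_ρ(ξ)(h)` where `h = z − ξ`. -/
lemma my_re_leviPoly {n : ℕ} (ρ : EuclideanSpace ℂ (Fin n) → ℝ)
    (ξ z : EuclideanSpace ℂ (Fin n)) :
    (leviPoly ρ ξ z).re
      = -(fderiv ℝ ρ ξ (z - ξ))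
        - (1 / 2) * (fderiv ℝ (fderiv ℝ ρ) ξ (z - ξ) (z - ξ))
        + leviForm ρ ξ (z - ξ) := by
  have hz : ∀ j, z j - ξ j = (z - ξ) j := fun _ => rfl
  have hI : ∀ j, ((Complex.I • (z - ξ) : EuclideanSpace ℂ (Fin n)) j) = Complex.I * (z - ξ) j :=
    fun _ => rfl
  have e1 : ((-2 : ℂ) * ∑ j, wirt1 ρ ξ j * (z j - ξ j)).re
      = -(fderiv ℝ ρ ξ (z - ξ)) := by
    rw [my_clm_expand (fderiv ℝ ρ ξ) (z - ξ)]
    rw [Finset.mul_sum, Complex.re_sum, ← Finset.sum_neg_distrib]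
    refine Finset.sum_congr rfl fun j _ => ?_
    simp only [hz, wirt1, Complex.mul_re, Complex.mul_im, Complex.sub_re, Complex.sub_im,
      Complex.ofReal_re, Complex.ofReal_im, Complex.I_re, Complex.I_im, Complex.div_re,
      Complex.div_im, Complex.one_re, Complex.one_im, Complex.re_ofNat, Complex.im_ofNat,
      Complex.neg_re, Complex.neg_im, Complex.normSq_apply]
    norm_num
    ring
  have e2 : (∑ j, ∑ k, wirt2 ρ ξ j k * (z j - ξ j) * (z k - ξ k)).re
      = (1 / 2) * (fderiv ℝ (fderiv ℝ ρ) ξ (z - ξ) (z - ξ)) - leviForm ρ ξ (z - ξ) := by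
    rw [leviForm, my_clm2_expand (fderiv ℝ (fderiv ℝ ρ) ξ) (z - ξ) (z - ξ),
      my_clm2_expand (fderiv ℝ (fderiv ℝ ρ) ξ) (Complex.I • (z - ξ)) (Complex.I • (z - ξ)),
      Complex.re_sum]
    simp only [Finset.mul_sum, ← Finset.sum_add_distrib, ← Finset.sum_sub_distrib,
      Complex.re_sum]
    refine Finset.sum_congr rfl fun j _ => ?_
    refine Finset.sum_congr rfl fun k _ => ?_
    simp only [hz, hI, wirt2, Complex.mul_re, Complex.mul_im, Complex.sub_re, Complex.sub_im,
      Complex.add_re, Complex.add_im, Complex.ofReal_re, Complex.ofReal_im,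
      Complex.I_re, Complex.I_im, Complex.div_re, Complex.div_im, Complex.one_re,
      Complex.one_im, Complex.re_ofNat, Complex.im_ofNat, Complex.neg_re,
      Complex.neg_im, Complex.normSq_apply]
    norm_num
    ring
  rw [leviPoly, Complex.sub_re, e1, e2]
  ring

lemma my_quad_deriv {n : ℕ}
    (Q : EuclideanSpace ℂ (Fin n) →L[ℝ] EuclideanSpace ℂ (Fin n) →L[ℝ] ℝ)
    (ξ y : EuclideanSpace ℂ (Fin n)) :
    HasFDerivAt (fun z => Q (z - ξ) (z - ξ)) (Q (y - ξ) + Q.flip (y - ξ)) y := by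
  have hb := Q.isBoundedBilinearMap.hasFDerivAt (y - ξ, y - ξ)
  have hd : HasFDerivAt (fun z : EuclideanSpace ℂ (Fin n) => ((z - ξ, z - ξ) :
      EuclideanSpace ℂ (Fin n) × EuclideanSpace ℂ (Fin n)))
      ((ContinuousLinearMap.id ℝ _).prod (ContinuousLinearMap.id ℝ _)) y :=
    HasFDerivAt.prodMk ((hasFDerivAt_id y).sub_const ξ) ((hasFDerivAt_id y).sub_const ξ)
  have := hb.comp y hd
  exact this

/-- Homogeneity of the Levi form under real scalings. -/
lemma my_leviForm_smul {n : ℕ} (ρ : EuclideanSpace ℂ (Fin n) → ℝ)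
    (ξ : EuclideanSpace ℂ (Fin n)) (t : ℝ) (v : EuclideanSpace ℂ (Fin n)) :
    leviForm ρ ξ (t • v) = t ^ 2 * leviForm ρ ξ v := by
  simp only [leviForm]
  have h1 : Complex.I • (t • v) = t • (Complex.I • v) := smul_comm _ _ _
  rw [h1]
  simp only [map_smul, ContinuousLinearMap.smul_apply, smul_eq_mul]
  ring

theorem levi_polynomial_estimate {n : ℕ} (Ω : Set (EuclideanSpace ℂ (Fin n)))
    (hΩ : IsOpen Ω) (ρ : EuclideanSpace ℂ (Fin n) → ℝ) (hρ : ContDiffOn ℝ 2 ρ Ω)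
    (ξ : EuclideanSpace ℂ (Fin n)) (hξ : ξ ∈ Ω)
    (hLevi : ∀ w : EuclideanSpace ℂ (Fin n), w ≠ 0 → 0 < leviForm ρ ξ w) :
    ∃ ε : ℝ, 0 < ε ∧ ε < 1 / 2 ∧ Metric.closedBall ξ (2 * ε) ⊆ Ω ∧
      ∀ z : EuclideanSpace ℂ (Fin n), ‖z - ξ‖ ≤ 2 * ε →
        (leviPoly ρ ξ z).re ≥ ρ ξ - ρ z + 2 * ε * ‖z - ξ‖ ^ 2 := by
  classical
  have hρξ : ContDiffAt ℝ 2 ρ ξ := hρ.contDiffAt (hΩ.mem_nhds hξ)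
  have hg : ContDiffAt ℝ 1 (fderiv ℝ ρ) ξ := hρξ.fderiv_right (by norm_num)
  set Q := fderiv ℝ (fderiv ℝ ρ) ξ with hQdef
  have hQ : HasFDerivAt (fderiv ℝ ρ) Q ξ := (hg.differentiableAt (by norm_num)).hasFDerivAt
  have hsymm : ∀ u w, Q u w = Q w u := fun u w => (hρξ.isSymmSndFDerivAt (by simp [minSmoothness_of_isRCLikeNormedField])) u w
  -- Coercivity of the Levi form
  obtain ⟨c₀, hc₀pos, hc₀⟩ : ∃ c₀ : ℝ, 0 < c₀ ∧
      ∀ w : EuclideanSpace ℂ (Fin n), c₀ * ‖w‖ ^ 2 ≤ leviForm ρ ξ w := by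
    by_cases hsph : (Metric.sphere (0 : EuclideanSpace ℂ (Fin n)) 1).Nonempty
    · have hb : Continuous fun p : EuclideanSpace ℂ (Fin n) × EuclideanSpace ℂ (Fin n) =>
          Q p.1 p.2 := Q.isBoundedBilinearMap.continuous
      have c1 : Continuous fun w : EuclideanSpace ℂ (Fin n) => Q w w :=
        hb.comp (continuous_id.prodMk continuous_id)
      have c2 : Continuous fun w : EuclideanSpace ℂ (Fin n) =>
          Q (Complex.I • w) (Complex.I • w) := c1.comp (continuous_const_smul Complex.I)
      have hcont : Continuous (leviForm ρ ξ) := by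
        show Continuous fun w => (1 / 4 : ℝ) * (Q w w + Q (Complex.I • w) (Complex.I • w))
        exact continuous_const.mul (c1.add c2)
      obtain ⟨u, hu, hmin⟩ :=
        (isCompact_sphere (0 : EuclideanSpace ℂ (Fin n)) 1).exists_isMinOn hsph
          hcont.continuousOn
      have hu1 : ‖u‖ = 1 := by simpa using hu
      refine ⟨leviForm ρ ξ u, hLevi u (by intro h; rw [h] at hu1; simp at hu1), fun w => ?_⟩
      by_cases hw : w = 0
      · simp [hw, leviForm]
      · have hnw : ‖w‖ ≠ 0 := norm_ne_zero_iff.2 hw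
        have hmem : (‖w‖⁻¹ • w) ∈ Metric.sphere (0 : EuclideanSpace ℂ (Fin n)) 1 := by
          simp [norm_smul, _root_.abs_of_nonneg (inv_nonneg.2 (norm_nonneg w)),
            inv_mul_cancel₀ hnw]
        have hle := isMinOn_iff.1 hmin _ hmem
        have h2 : leviForm ρ ξ (‖w‖⁻¹ • w) = (‖w‖⁻¹) ^ 2 * leviForm ρ ξ w :=
          my_leviForm_smul ρ ξ _ w
        rw [h2] at hle
        have hpos : (0 : ℝ) < ‖w‖ ^ 2 := by positivity
        calc leviForm ρ ξ u * ‖w‖ ^ 2 ≤ ((‖w‖⁻¹) ^ 2 * leviForm ρ ξ w) * ‖w‖ ^ 2 :=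
              mul_le_mul_of_nonneg_right hle hpos.le
          _ = leviForm ρ ξ w := by field_simp
    · refine ⟨1, one_pos, fun w => ?_⟩
      have hw : w = 0 := by
        by_contra h0
        exact hsph ⟨‖w‖⁻¹ • w, by
          simp [norm_smul, _root_.abs_of_nonneg (inv_nonneg.2 (norm_nonneg w)),
            inv_mul_cancel₀ (norm_ne_zero_iff.2 h0)]⟩
      simp [hw, leviForm]
  -- Second-order Taylor estimate with remainder bounded by (c₀/2)·‖h‖²
  obtain ⟨r₀, hr₀pos, hr₀⟩ : ∃ r₀ > 0, Metric.ball ξ r₀ ⊆ Ω := Metric.isOpen_iff.1 hΩ ξ hξ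
  have hc2 : (0 : ℝ) < c₀ / 2 := by linarith
  obtain ⟨δ', hδ'pos, hδ'⟩ := Metric.eventually_nhds_iff.1
    ((hasFDerivAt_iff_isLittleO_nhds_zero.1 hQ).bound hc2)
  set δ : ℝ := min (δ' / 2) (r₀ / 2) with hδdef
  have hδpos : 0 < δ := lt_min (by linarith) (by linarith)
  have hδΩ : Metric.closedBall ξ δ ⊆ Ω := by
    refine Set.Subset.trans ?_ hr₀
    intro y hy
    have : dist y ξ ≤ δ := Metric.mem_closedBall.1 hy
    exact Metric.mem_ball.2 (lt_of_le_of_lt this (lt_of_le_of_lt (min_le_right _ _)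
      (by linarith)))
  have taylor : ∀ z : EuclideanSpace ℂ (Fin n), ‖z - ξ‖ ≤ δ →
      |ρ z - ρ ξ - fderiv ℝ ρ ξ (z - ξ) - (1 / 2) * Q (z - ξ) (z - ξ)|
        ≤ (c₀ / 2) * ‖z - ξ‖ ^ 2 := by
    intro z hz
    set G : EuclideanSpace ℂ (Fin n) → ℝ := fun y =>
      ρ y - fderiv ℝ ρ ξ (y - ξ) - (1 / 2) * Q (y - ξ) (y - ξ) with hGdef
    set s : Set (EuclideanSpace ℂ (Fin n)) := Metric.closedBall ξ ‖z - ξ‖ with hsdef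
    have hsΩ : s ⊆ Ω := by
      refine Set.Subset.trans ?_ hδΩ
      exact Metric.closedBall_subset_closedBall hz
    have hDG : ∀ y ∈ s, HasFDerivAt G (fderiv ℝ ρ y - fderiv ℝ ρ ξ - Q (y - ξ)) y := by
      intro y hy
      have hyΩ : y ∈ Ω := hsΩ hy
      have h1 : HasFDerivAt ρ (fderiv ℝ ρ y) y :=
        ((hρ.contDiffAt (hΩ.mem_nhds hyΩ)).differentiableAt (by norm_num)).hasFDerivAt
      have h2 : HasFDerivAt (fun y' : EuclideanSpace ℂ (Fin n) =>
          (fderiv ℝ ρ ξ) (y' - ξ)) (fderiv ℝ ρ ξ) y := by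
        have h := (fderiv ℝ ρ ξ).hasFDerivAt.comp y ((hasFDerivAt_id y).sub_const ξ)
        rw [ContinuousLinearMap.comp_id] at h
        exact h
      have h3 : HasFDerivAt (fun y' : EuclideanSpace ℂ (Fin n) =>
          (1 / 2 : ℝ) * Q (y' - ξ) (y' - ξ)) (Q (y - ξ)) y := by
        have h4 := (my_quad_deriv Q ξ y).const_mul (1 / 2 : ℝ)
        have h5 : (1 / 2 : ℝ) • (Q (y - ξ) + Q.flip (y - ξ)) = Q (y - ξ) := by
          ext w
          simp only [ContinuousLinearMap.smul_apply, ContinuousLinearMap.add_apply,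
            ContinuousLinearMap.flip_apply, smul_eq_mul]
          rw [hsymm w (y - ξ)]
          ring
        rwa [h5] at h4
      exact (h1.sub h2).sub h3
    have hbound : ∀ y ∈ s, ‖fderiv ℝ ρ y - fderiv ℝ ρ ξ - Q (y - ξ)‖
        ≤ (c₀ / 2) * ‖z - ξ‖ := by
      intro y hy
      have hy' : ‖y - ξ‖ ≤ ‖z - ξ‖ := by
        have := Metric.mem_closedBall.1 hy
        rwa [dist_eq_norm] at this
      have hlt : dist (y - ξ) (0 : EuclideanSpace ℂ (Fin n)) < δ' := by
        rw [dist_zero_right]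
        calc ‖y - ξ‖ ≤ ‖z - ξ‖ := hy'
          _ ≤ δ := hz
          _ ≤ δ' / 2 := min_le_left _ _
          _ < δ' := by linarith
      have := hδ' hlt
      simp only [add_sub_cancel] at this
      calc ‖fderiv ℝ ρ y - fderiv ℝ ρ ξ - Q (y - ξ)‖ ≤ (c₀ / 2) * ‖y - ξ‖ := this
        _ ≤ (c₀ / 2) * ‖z - ξ‖ := mul_le_mul_of_nonneg_left hy' hc2.le
    have hGz : ‖G z - G ξ‖ ≤ (c₀ / 2) * ‖z - ξ‖ * ‖z - ξ‖ :=
      Convex.norm_image_sub_le_of_norm_hasFDerivWithin_le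
        (fun y hy => (hDG y hy).hasFDerivWithinAt) hbound (convex_closedBall _ _)
        (Metric.mem_closedBall_self (norm_nonneg _)) (by
          simp [hsdef, Metric.mem_closedBall, dist_eq_norm])
    have hGξ : G ξ = ρ ξ := by simp [hGdef]
    rw [hGξ] at hGz
    have : |G z - ρ ξ| ≤ (c₀ / 2) * ‖z - ξ‖ * ‖z - ξ‖ := by
      rwa [Real.norm_eq_abs] at hGz
    calc |ρ z - ρ ξ - fderiv ℝ ρ ξ (z - ξ) - (1 / 2) * Q (z - ξ) (z - ξ)|
        = |G z - ρ ξ| := by rw [hGdef]; ring_nf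
      _ ≤ (c₀ / 2) * ‖z - ξ‖ * ‖z - ξ‖ := this
      _ = (c₀ / 2) * ‖z - ξ‖ ^ 2 := by ring
  -- Choose ε
  refine ⟨min (min (c₀ / 4) (δ / 2)) (1 / 4), ?_, ?_, ?_, ?_⟩
  · exact lt_min (lt_min (by linarith) (by linarith)) (by norm_num)
  · exact lt_of_le_of_lt (min_le_right _ _) (by norm_num)
  · refine Set.Subset.trans ?_ hδΩ
    apply Metric.closedBall_subset_closedBall
    have h1 : min (min (c₀ / 4) (δ / 2)) (1 / 4) ≤ δ / 2 :=
      le_trans (min_le_left _ _) (min_le_right _ _)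
    linarith
  · intro z hz
    set ε : ℝ := min (min (c₀ / 4) (δ / 2)) (1 / 4) with hεdef
    have hεδ : 2 * ε ≤ δ := by
      have h1 : ε ≤ δ / 2 := le_trans (min_le_left _ _) (min_le_right _ _)
      linarith
    have hεc : ε ≤ c₀ / 4 := le_trans (min_le_left _ _) (min_le_left _ _)
    have hzδ : ‖z - ξ‖ ≤ δ := le_trans hz hεδ
    have htay := taylor z hzδ
    have hlev := hc₀ (z - ξ)
    rw [ge_iff_le, my_re_leviPoly]
    rw [abs_le] at htay
    have hN : (0 : ℝ) ≤ ‖z - ξ‖ ^ 2 := sq_nonneg _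
    have hmul : 2 * ε * ‖z - ξ‖ ^ 2 ≤ (c₀ / 2) * ‖z - ξ‖ ^ 2 :=
      mul_le_mul_of_nonneg_right (by linarith) hN
    linarith [htay.1, htay.2]
end
end

section
/- Let Ω ⊆ ℂ^n be open, let ρ : Ω → ℝ be of class C², and let ξ ∈ Ω be a point at which the Levi form of ρ is positive definite, i.e. L_ρ(ξ)(w) > 0 for every w ≠ 0. Then there exist ε with 0 < ε < 1/2 and an entire function h : ℂ^n → ℂ such that the closed ball {|z−ξ| ≤ 2ε} is contained in Ω, h(ξ) = 1, and |h(z)| ≤ e^{−ε³} < 1 for every z ∈ Ω satisfying ρ(z) ≤ ρ(ξ) + ε³ and ε ≤ |z−ξ| ≤ 2ε. -/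
open Complex Metric

noncomputable section

lemma leviPoly_re {n : ℕ} (ρ : EuclideanSpace ℂ (Fin n) → ℝ)
    (ξ w : EuclideanSpace ℂ (Fin n)) :
    (leviPoly ρ ξ (ξ + w)).re
      = -(fderiv ℝ ρ ξ w) - (1/2) * (fderiv ℝ (fderiv ℝ ρ) ξ w w) + leviForm ρ ξ w := by
  set f' := fderiv ℝ ρ ξ with hf'
  set B := fderiv ℝ (fderiv ℝ ρ) ξ with hB
  set e : Fin n → EuclideanSpace ℂ (Fin n) := basisVec with he
  set x : Fin n → ℝ := fun j => (w j).re with hx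
  set y : Fin n → ℝ := fun j => (w j).im with hy
  set u : Fin n → EuclideanSpace ℂ (Fin n) :=
    fun j => x j • e j + y j • (Complex.I • e j) with hu
  have hsmul : ∀ (c : ℂ) (v : EuclideanSpace ℂ (Fin n)),
      c • v = c.re • v + c.im • (Complex.I • v) := by
    intro c v
    rw [← Complex.re_add_im c, add_smul, mul_smul]
    norm_num [Complex.coe_smul]
  have hw : w = ∑ j, u j := by
    have h0 : w = ∑ j, w j • e j := by
      ext i
      rw [show (∑ j, w j • e j) i = ∑ j, (w j • e j) i from by rw [WithLp.ofLp_sum, Finset.sum_apply]]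
      simp [he, basisVec, EuclideanSpace.single_apply]
    rw [h0]
    exact Finset.sum_congr rfl fun j _ => hsmul (w j) (e j)
  have hIu : ∀ j, Complex.I • u j = x j • (Complex.I • e j) - y j • e j := by
    intro j
    rw [hu]
    simp only [smul_add, smul_comm Complex.I (x _), smul_comm Complex.I (y _),
      smul_smul, Complex.I_mul_I, neg_one_smul]
    rw [smul_neg]
    abel
  -- expansions
  have h1 : f' w = ∑ j, (x j * f' (e j) + y j * f' (Complex.I • e j)) := by
    rw [hw, map_sum]
    exact Finset.sum_congr rfl fun j _ => by
      simp [hu, smul_eq_mul]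
  have h2 : B w w = ∑ j, ∑ k, B (u j) (u k) := by
    have hBw : B w = ∑ j, B (u j) := by rw [hw]; exact map_sum B _ _
    rw [hBw, ContinuousLinearMap.sum_apply]
    refine Finset.sum_congr rfl fun j _ => ?_
    rw [hw]; exact map_sum (B (u j)) _ _
  have h3 : B (Complex.I • w) (Complex.I • w) = ∑ j, ∑ k, B (Complex.I • u j) (Complex.I • u k) := by
    have hIw : Complex.I • w = ∑ j, Complex.I • u j := by rw [hw, Finset.smul_sum]
    have hBw : B (Complex.I • w) = ∑ j, B (Complex.I • u j) := by rw [hIw]; exact map_sum B _ _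
    rw [hBw, ContinuousLinearMap.sum_apply]
    refine Finset.sum_congr rfl fun j _ => ?_
    rw [hIw]; exact map_sum (B (Complex.I • u j)) _ _
  have hBu : ∀ j k, B (u j) (u k)
      = x j * x k * B (e j) (e k) + x j * y k * B (e j) (Complex.I • e k)
        + y j * x k * B (Complex.I • e j) (e k)
        + y j * y k * B (Complex.I • e j) (Complex.I • e k) := by
    intro j k
    simp only [hu, map_add, map_smul, ContinuousLinearMap.add_apply,
      ContinuousLinearMap.smul_apply, ContinuousLinearMap.coe_smul', Pi.smul_apply, smul_eq_mul]
    ring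
  have hBIu : ∀ j k, B (Complex.I • u j) (Complex.I • u k)
      = x j * x k * B (Complex.I • e j) (Complex.I • e k)
        - x j * y k * B (Complex.I • e j) (e k)
        - y j * x k * B (e j) (Complex.I • e k) + y j * y k * B (e j) (e k) := by
    intro j k
    rw [hIu, hIu]
    simp only [map_sub, map_smul, ContinuousLinearMap.sub_apply,
      ContinuousLinearMap.smul_apply, ContinuousLinearMap.coe_smul', Pi.smul_apply, smul_eq_mul]
    ring
  have key1 : ∀ j, (wirt1 ρ ξ j * w j).re
      = (1/2) * (x j * f' (e j) + y j * f' (Complex.I • e j)) := by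
    intro j
    simp [wirt1, Complex.mul_re, Complex.mul_im, ← hf', ← he, hx, hy]
    ring
  have key2 : ∀ j k, (wirt2 ρ ξ j k * w j * w k).re
      = (1/4) * (B (u j) (u k) - B (Complex.I • u j) (Complex.I • u k)) := by
    intro j k
    rw [hBu, hBIu]
    simp [wirt2, Complex.mul_re, Complex.mul_im, ← hB, ← he, hx, hy]
    ring
  have h4 : (leviPoly ρ ξ (ξ + w)).re
      = -2 * ∑ j, (wirt1 ρ ξ j * w j).re - ∑ j, ∑ k, (wirt2 ρ ξ j k * w j * w k).re := by
    simp only [leviPoly, PiLp.add_apply, add_sub_cancel_left]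
    rw [Complex.sub_re, Complex.mul_re]
    simp [Complex.re_sum, Complex.im_sum]
  have hL : leviForm ρ ξ w = (1/4) * (B w w + B (Complex.I • w) (Complex.I • w)) := rfl
  rw [h4, hL, h1, h2, h3]
  rw [Finset.sum_congr rfl fun j _ => key1 j,
    Finset.sum_congr rfl (fun j _ => Finset.sum_congr rfl fun k _ => key2 j k)]
  rw [← Finset.mul_sum]
  rw [show (∑ j, ∑ k, (1/4) * (B (u j) (u k) - B (Complex.I • u j) (Complex.I • u k)))
      = (1/4) * ((∑ j, ∑ k, B (u j) (u k)) - ∑ j, ∑ k, B (Complex.I • u j) (Complex.I • u k)) by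
    rw [mul_sub, Finset.mul_sum, Finset.mul_sum, ← Finset.sum_sub_distrib]
    refine Finset.sum_congr rfl fun j _ => ?_
    rw [Finset.mul_sum, Finset.mul_sum, ← Finset.sum_sub_distrib]
    exact Finset.sum_congr rfl fun k _ => by ring]
  ring

lemma leviForm_smul {n : ℕ} (ρ : EuclideanSpace ℂ (Fin n) → ℝ)
    (ξ w : EuclideanSpace ℂ (Fin n)) (t : ℝ) :
    leviForm ρ ξ (t • w) = t^2 * leviForm ρ ξ w := by
  unfold leviForm
  rw [show Complex.I • t • w = t • (Complex.I • w) from smul_comm _ _ _]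
  simp only [map_smul, ContinuousLinearMap.smul_apply, smul_eq_mul,
    ContinuousLinearMap.coe_smul', Pi.smul_apply]
  ring

lemma leviForm_zero {n : ℕ} (ρ : EuclideanSpace ℂ (Fin n) → ℝ)
    (ξ : EuclideanSpace ℂ (Fin n)) : leviForm ρ ξ 0 = 0 := by
  simp [leviForm]

lemma leviForm_lower {n : ℕ} (ρ : EuclideanSpace ℂ (Fin n) → ℝ)
    (ξ : EuclideanSpace ℂ (Fin n))
    (hLevi : ∀ w : EuclideanSpace ℂ (Fin n), w ≠ 0 → 0 < leviForm ρ ξ w) :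
    ∃ c > 0, ∀ w : EuclideanSpace ℂ (Fin n), c * ‖w‖^2 ≤ leviForm ρ ξ w := by
  by_cases hE : ∃ w : EuclideanSpace ℂ (Fin n), w ≠ 0
  · obtain ⟨w0, hw0⟩ := hE
    have hsph : (Metric.sphere (0 : EuclideanSpace ℂ (Fin n)) 1).Nonempty := by
      refine ⟨‖w0‖⁻¹ • w0, ?_⟩
      have : ‖w0‖ ≠ 0 := norm_ne_zero_iff.2 hw0
      simp [mem_sphere_zero_iff_norm, norm_smul, abs_of_nonneg, inv_mul_cancel₀ this]
    have hcont : Continuous (fun w => leviForm ρ ξ w) := by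
      set B := fderiv ℝ (fderiv ℝ ρ) ξ
      have h1 : Continuous fun w : EuclideanSpace ℂ (Fin n) => B w w :=
        isBoundedBilinearMap_apply.continuous.comp
          ((B.continuous.comp continuous_id).prodMk continuous_id)
      have h2 : Continuous fun w : EuclideanSpace ℂ (Fin n) =>
          B (Complex.I • w) (Complex.I • w) :=
        h1.comp (continuous_const_smul _)
      exact continuous_const.mul (h1.add h2)
    obtain ⟨a, ha, hmin⟩ := (isCompact_sphere (0 : EuclideanSpace ℂ (Fin n)) 1).exists_isMinOn
      hsph hcont.continuousOn
    have hanorm : ‖a‖ = 1 := mem_sphere_zero_iff_norm.1 ha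
    have ha0 : a ≠ 0 := by intro h; rw [h] at hanorm; simp at hanorm
    refine ⟨leviForm ρ ξ a, hLevi a ha0, fun w => ?_⟩
    by_cases hw : w = 0
    · simp [hw, leviForm_zero]
    · have hnw : ‖w‖ ≠ 0 := norm_ne_zero_iff.2 hw
      have hmem : ‖w‖⁻¹ • w ∈ Metric.sphere (0 : EuclideanSpace ℂ (Fin n)) 1 := by
        simp [mem_sphere_zero_iff_norm, norm_smul, inv_mul_cancel₀ hnw]
      have hge : leviForm ρ ξ a ≤ leviForm ρ ξ (‖w‖⁻¹ • w) := hmin hmem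
      have heq : leviForm ρ ξ w = ‖w‖^2 * leviForm ρ ξ (‖w‖⁻¹ • w) := by
        rw [← leviForm_smul, smul_smul, mul_inv_cancel₀ hnw, one_smul]
      rw [heq]
      have h2 : (0:ℝ) ≤ ‖w‖^2 := sq_nonneg _
      nlinarith [hge]
  · push_neg at hE
    refine ⟨1, one_pos, fun w => ?_⟩
    rw [hE w]
    simp [leviForm_zero]

lemma taylor_remainder {n : ℕ} {Ω : Set (EuclideanSpace ℂ (Fin n))}
    (hΩ : IsOpen Ω) {ρ : EuclideanSpace ℂ (Fin n) → ℝ} (hρ : ContDiffOn ℝ 2 ρ Ω)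
    {ξ : EuclideanSpace ℂ (Fin n)} (hξ : ξ ∈ Ω) {η : ℝ} (hη : 0 < η) :
    ∃ δ > 0, Metric.ball ξ δ ⊆ Ω ∧ ∀ w : EuclideanSpace ℂ (Fin n), ‖w‖ < δ →
      |ρ (ξ + w) - ρ ξ - fderiv ℝ ρ ξ w
        - (1/2) * fderiv ℝ (fderiv ℝ ρ) ξ w w| ≤ η * ‖w‖^2 := by
  set B := fderiv ℝ (fderiv ℝ ρ) ξ with hBdef
  obtain ⟨r, hr, hrΩ⟩ := Metric.isOpen_iff.1 hΩ ξ hξ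
  have hder : ∀ x ∈ Ω, HasFDerivAt ρ (fderiv ℝ ρ x) x := fun x hx =>
    ((hρ.contDiffAt (hΩ.mem_nhds hx)).differentiableAt two_ne_zero).hasFDerivAt
  have h2 : ContDiffAt ℝ 2 ρ ξ := hρ.contDiffAt (hΩ.mem_nhds hξ)
  have hfd : ContDiffAt ℝ 1 (fderiv ℝ ρ) ξ :=
    h2.fderiv_right (by norm_num)
  have hB : HasFDerivAt (fderiv ℝ ρ) B ξ := (hfd.differentiableAt one_ne_zero).hasFDerivAt
  have hsymm : ∀ v w, B v w = B w v := fun v w =>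
    second_derivative_symmetric_of_eventually
      (by filter_upwards [hΩ.mem_nhds hξ] with y hy using hder y hy) hB v w
  have hlo := hasFDerivAt_iff_isLittleO_nhds_zero.mp hB
  rw [Asymptotics.isLittleO_iff] at hlo
  have hev := hlo hη
  rw [Metric.eventually_nhds_iff] at hev
  obtain ⟨δ₀, hδ₀, hball⟩ := hev
  refine ⟨min δ₀ r, lt_min hδ₀ hr, fun z hz => hrΩ (Metric.ball_subset_ball (min_le_right _ _) hz), ?_⟩
  intro w hw
  have hwr : ‖w‖ < r := lt_of_lt_of_le hw (min_le_right _ _)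
  have hwδ : ‖w‖ < δ₀ := lt_of_lt_of_le hw (min_le_left _ _)
  set g : EuclideanSpace ℂ (Fin n) → ℝ :=
    fun u => ρ (ξ + u) - fderiv ℝ ρ ξ u - (1/2) * B u u with hgdef
  set g' : EuclideanSpace ℂ (Fin n) → (EuclideanSpace ℂ (Fin n) →L[ℝ] ℝ) :=
    fun u => fderiv ℝ ρ (ξ + u) - fderiv ℝ ρ ξ - B u with hg'def
  have hmem : ∀ u ∈ Metric.closedBall (0 : EuclideanSpace ℂ (Fin n)) ‖w‖, ξ + u ∈ Ω := by
    intro u hu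
    apply hrΩ
    rw [Metric.mem_ball, dist_eq_norm, add_sub_cancel_left]
    exact lt_of_le_of_lt (by simpa [dist_eq_norm] using hu) hwr
  have hgderiv : ∀ u ∈ Metric.closedBall (0 : EuclideanSpace ℂ (Fin n)) ‖w‖,
      HasFDerivAt g (g' u) u := by
    intro u hu
    have A1 : HasFDerivAt (fun u => ρ (ξ + u)) (fderiv ℝ ρ (ξ + u)) u := by
      have := (hder (ξ + u) (hmem u hu)).comp u ((hasFDerivAt_id u).const_add ξ)
      rwa [ContinuousLinearMap.comp_id] at this
    have A2 : HasFDerivAt (fun u => fderiv ℝ ρ ξ u) (fderiv ℝ ρ ξ) u :=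
      (fderiv ℝ ρ ξ).hasFDerivAt
    have hb : HasFDerivAt (fun v => B v v)
        ((B u).comp (ContinuousLinearMap.id ℝ _) + B.flip u) u :=
      B.hasFDerivAt.clm_apply (hasFDerivAt_id u)
    have hb2 := hb.const_mul (1/2 : ℝ)
    have heq : (1/2 : ℝ) • ((B u).comp (ContinuousLinearMap.id ℝ _) + B.flip u) = B u := by
      ext v
      simp only [ContinuousLinearMap.smul_apply, ContinuousLinearMap.add_apply,
        ContinuousLinearMap.coe_comp', Function.comp_apply, ContinuousLinearMap.coe_id',
        id_eq, ContinuousLinearMap.flip_apply, smul_eq_mul]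
      rw [hsymm v u]
      ring
    rw [heq] at hb2
    exact (A1.sub A2).sub hb2
  have hgbound : ∀ u ∈ Metric.closedBall (0 : EuclideanSpace ℂ (Fin n)) ‖w‖,
      ‖g' u‖ ≤ η * ‖w‖ := by
    intro u hu
    have hun : ‖u‖ ≤ ‖w‖ := by simpa [dist_eq_norm] using hu
    have := hball (y := u) (by simpa [dist_eq_norm] using lt_of_le_of_lt hun hwδ)
    calc ‖g' u‖ = ‖fderiv ℝ ρ (ξ + u) - fderiv ℝ ρ ξ - B u‖ := rfl
      _ ≤ η * ‖u‖ := this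
      _ ≤ η * ‖w‖ := by nlinarith [norm_nonneg u]
  have := Convex.norm_image_sub_le_of_norm_hasFDerivWithin_le
    (f := g) (f' := g') (fun u hu => (hgderiv u hu).hasFDerivWithinAt) hgbound
    (convex_closedBall _ _) (Metric.mem_closedBall_self (norm_nonneg w))
    (show w ∈ Metric.closedBall (0 : EuclideanSpace ℂ (Fin n)) ‖w‖ by
      simp [Metric.mem_closedBall, dist_eq_norm])
  have hg0 : g 0 = ρ ξ := by simp [hgdef]
  have hgw : g w = ρ (ξ + w) - fderiv ℝ ρ ξ w - (1/2) * B w w := rfl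
  rw [hg0, hgw, sub_zero, Real.norm_eq_abs] at this
  calc |ρ (ξ + w) - ρ ξ - fderiv ℝ ρ ξ w - (1/2) * B w w|
      = |ρ (ξ + w) - fderiv ℝ ρ ξ w - 1/2 * B w w - ρ ξ| := by ring_nf
    _ ≤ η * ‖w‖ * ‖w‖ := this
    _ = η * ‖w‖^2 := by ring

lemma leviPoly_differentiable {n : ℕ} (ρ : EuclideanSpace ℂ (Fin n) → ℝ)
    (ξ : EuclideanSpace ℂ (Fin n)) : Differentiable ℂ (leviPoly ρ ξ) := by
  have hproj : ∀ j : Fin n, Differentiable ℂ (fun z : EuclideanSpace ℂ (Fin n) => z j) :=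
    fun j => (EuclideanSpace.proj j : EuclideanSpace ℂ (Fin n) →L[ℂ] ℂ).differentiable
  have h1 : Differentiable ℂ (fun z : EuclideanSpace ℂ (Fin n) =>
      ∑ j, wirt1 ρ ξ j * (z j - ξ j)) :=
    Differentiable.fun_sum fun j _ => ((hproj j).sub_const (ξ j)).const_mul _
  have h2 : Differentiable ℂ (fun z : EuclideanSpace ℂ (Fin n) =>
      ∑ j, ∑ k, wirt2 ρ ξ j k * (z j - ξ j) * (z k - ξ k)) :=
    Differentiable.fun_sum fun j _ => Differentiable.fun_sum fun k _ =>
      (((hproj j).sub_const (ξ j)).const_mul _).mul ((hproj k).sub_const (ξ k))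
  exact (h1.const_mul _).sub h2

lemma leviPoly_self {n : ℕ} (ρ : EuclideanSpace ℂ (Fin n) → ℝ)
    (ξ : EuclideanSpace ℂ (Fin n)) : leviPoly ρ ξ ξ = 0 := by
  simp [leviPoly]

theorem exists_entire_peak_function {n : ℕ} (Ω : Set (EuclideanSpace ℂ (Fin n)))
    (hΩ : IsOpen Ω) (ρ : EuclideanSpace ℂ (Fin n) → ℝ) (hρ : ContDiffOn ℝ 2 ρ Ω)
    (ξ : EuclideanSpace ℂ (Fin n)) (hξ : ξ ∈ Ω)
    (hLevi : ∀ w : EuclideanSpace ℂ (Fin n), w ≠ 0 → 0 < leviForm ρ ξ w) :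
    ∃ (ε : ℝ) (h : EuclideanSpace ℂ (Fin n) → ℂ),
      0 < ε ∧ ε < 1 / 2 ∧ Metric.closedBall ξ (2 * ε) ⊆ Ω ∧
      (∀ z : EuclideanSpace ℂ (Fin n), DifferentiableAt ℂ h z) ∧
      h ξ = 1 ∧
      ∀ z ∈ Ω, ρ z ≤ ρ ξ + ε ^ 3 → ε ≤ ‖z - ξ‖ → ‖z - ξ‖ ≤ 2 * ε →
        ‖h z‖ ≤ Real.exp (-ε ^ 3) ∧ Real.exp (-ε ^ 3) < 1 := by
  obtain ⟨c, hc, hcL⟩ := leviForm_lower ρ ξ hLevi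
  obtain ⟨δ, hδ, hδΩ, hrem⟩ := taylor_remainder hΩ hρ hξ (half_pos hc)
  set ε : ℝ := min (min (δ/3) (c/4)) (1/4) with hεdef
  have hε0 : 0 < ε := lt_min (lt_min (by positivity) (by positivity)) (by norm_num)
  have hεδ : ε ≤ δ/3 := le_trans (min_le_left _ _) (min_le_left _ _)
  have hεc : ε ≤ c/4 := le_trans (min_le_left _ _) (min_le_right _ _)
  have hε4 : ε ≤ 1/4 := min_le_right _ _
  refine ⟨ε, fun z => Complex.exp (-(leviPoly ρ ξ z)), hε0, by linarith, ?_, ?_, ?_, ?_⟩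
  · intro z hz
    apply hδΩ
    rw [Metric.mem_ball]
    rw [Metric.mem_closedBall] at hz
    linarith
  · intro z
    exact (((leviPoly_differentiable ρ ξ) z).neg.cexp)
  · show Complex.exp (-(leviPoly ρ ξ ξ)) = 1
    rw [leviPoly_self, neg_zero, Complex.exp_zero]
  · intro z hz hρz hlow hupp
    set w : EuclideanSpace ℂ (Fin n) := z - ξ with hwdef
    have hzw : z = ξ + w := by rw [hwdef]; abel
    have hwδ : ‖w‖ < δ := by
      have : ‖w‖ ≤ 2 * ε := hupp
      linarith
    have hrem' := hrem w hwδ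
    have hlev := hcL w
    have hre := leviPoly_re ρ ξ w
    have habs := abs_le.1 hrem'
    have hρz' : ρ (ξ + w) ≤ ρ ξ + ε ^ 3 := by rw [← hzw]; exact hρz
    have hw2 : ε ^ 2 ≤ ‖w‖ ^ 2 := by nlinarith [hlow, hε0.le]
    have hkey : ε ^ 3 ≤ (leviPoly ρ ξ z).re := by
      rw [hzw, hre]
      nlinarith [habs.1, habs.2, hlev, hw2, hε0.le, norm_nonneg w]
    constructor
    · rw [Complex.norm_exp]
      apply Real.exp_le_exp.2
      simp only [Complex.neg_re]
      linarith
    · have : (-ε ^ 3 : ℝ) < 0 := by nlinarith [pow_pos hε0 3]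
      calc Real.exp (-ε ^ 3) < Real.exp 0 := Real.exp_lt_exp.2 this
        _ = 1 := Real.exp_zero
end
end
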